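/- arXiv:1103.1786 — 4 statements merged into one kernel-verified Lean document; each statement's English description precedes it below -/
import Mathlib

section
/- Let R ⊆ S be an integral extension of integral domains with S contained in the fraction field of R (e.g., S the integral closure of R in its fraction field), and let I be an ideal of R. Then every element of (IS) ∩ R lies in the integral closure of the ideal I in R. -/
set_option synthInstance.maxHeartbeats 1000000
set_option maxHeartbeats 2000000

/-- `x` is integral over the ideal `I`. -/
def IsIntegralOverIdeal {R : Type*} [CommRing R] (I : Ideal R) (x : R) : Prop :=
  ∃ n : ℕ, 0 < n ∧ ∃ a : ℕ → R, (∀ i ∈ Finset.Icc 1 n, a i ∈ I ^ i) ∧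
    x ^ n + ∑ i ∈ Finset.Icc 1 n, a i * x ^ (n - i) = 0

/-- If `S` is a subring of the fraction field of `R` which is integral over
`R`, and `I` an ideal of `R`, then every element of `IS ∩ R` is integral over `I`. -/
theorem stmt_4 {R : Type*} [CommRing R] [IsDomain R]
    (S : Subalgebra R (FractionRing R)) (hS : ∀ s : S, IsIntegral R (s : FractionRing R))
    (I : Ideal R) (x : R)
    (hx : (⟨algebraMap R (FractionRing R) x, Subalgebra.algebraMap_mem S x⟩ : S) ∈
      I.map (algebraMap R S)) :
    IsIntegralOverIdeal I x := by
  classical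
  set K := FractionRing R
  set y : S := ⟨algebraMap R K x, Subalgebra.algebraMap_mem S x⟩ with hy_def
  have hint : ∀ s : S, IsIntegral R s := fun s =>
    (isIntegral_algHom_iff S.val Subtype.val_injective).mp (hS s)
  have hy : y ∈ I • (⊤ : Submodule R S) := by
    rw [Ideal.smul_top_eq_map]; exact hx
  have hy' : y ∈ I • Submodule.span R (Set.range (id : S → S)) := by
    simpa [Set.range_id] using hy
  obtain ⟨a, haI, hsum⟩ := (Submodule.mem_ideal_smul_span_iff_exists_sum I id y).mp hy'
  set G : Set S := insert y ↑a.support with hG_def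
  set T : Subalgebra R S := Algebra.adjoin R G with hT_def
  have hTfg : (Subalgebra.toSubmodule T).FG :=
    fg_adjoin_of_finite (Set.Finite.insert _ a.support.finite_toSet) (fun s _ => hint s)
  haveI : Module.Finite R T := Module.Finite.iff_fg.mpr hTfg
  set z : T := ⟨y, Algebra.subset_adjoin (Set.mem_insert _ _)⟩ with hz_def
  -- the multiplication-by-z endomorphism has range in I • ⊤
  have hrange : LinearMap.range (Algebra.lmul R T z) ≤ I • (⊤ : Submodule R T) := by
    rintro w ⟨t, rfl⟩
    have key : (z * t : T).1 ∈ I • (Subalgebra.toSubmodule T) := by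
      have h1 : (z * t : T).1 = ∑ s ∈ a.support, a s • (s * (t : S)) := by
        show y * (t : S) = _
        rw [← hsum, Finsupp.sum, Finset.sum_mul]
        simp [smul_mul_assoc]
      rw [h1]
      refine Submodule.sum_mem _ fun s hs => Submodule.smul_mem_smul (haI s) ?_
      exact T.mul_mem (Algebra.subset_adjoin (Set.mem_insert_of_mem _ hs)) t.2
    have h2 : I • (Subalgebra.toSubmodule T) =
        Submodule.map (Subalgebra.toSubmodule T).subtype (I • (⊤ : Submodule R T)) := by
      rw [Submodule.map_smul'', Submodule.map_top, Submodule.range_subtype]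
    rw [h2] at key
    obtain ⟨u, hu, huv⟩ := key
    have : u = z * t := Subtype.ext huv
    rwa [this] at hu
  obtain ⟨p, hmonic, -, hcoeff, haeval⟩ :=
    LinearMap.exists_monic_and_coeff_mem_pow_and_aeval_eq_zero_of_range_le_smul R (M := T)
      (Algebra.lmul R T z) I hrange
  -- deduce p(z) = 0 in T
  have h0 : Polynomial.aeval z p = (0 : T) := by
    have h1 := LinearMap.congr_fun haeval (1 : T)
    rw [Polynomial.aeval_algHom_apply] at h1
    simpa using h1
  -- push down to R
  have hpx : p.eval x = 0 := by
    have h2 : (Polynomial.aeval z p : T).1 = Polynomial.aeval y p :=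
      (Polynomial.aeval_algHom_apply T.val z p).symm
    have h3 : (y : K) = algebraMap R K x := rfl
    have h4 : Polynomial.aeval ((y : S) : K) p = algebraMap R K (p.eval x) := by
      rw [h3, Polynomial.aeval_algebraMap_apply, Polynomial.coe_aeval_eq_eval]
    have h5 : algebraMap R K (p.eval x) = 0 := by
      rw [← h4]
      have : ((Polynomial.aeval y p : S) : K) = Polynomial.aeval ((y : S) : K) p :=
        (Polynomial.aeval_algHom_apply S.val y p).symm
      rw [← this, ← h2, h0]
      rfl
    exact IsFractionRing.injective R K (by simpa using h5)
  set n := p.natDegree with hn_def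
  have hn : 0 < n := by
    rcases Nat.eq_zero_or_pos n with h | h
    · exfalso
      have : p = 1 := (Polynomial.Monic.natDegree_eq_zero hmonic).mp h
      rw [this] at hpx
      simp at hpx
    · exact h
  refine ⟨n, hn, fun i => p.coeff (n - i), fun i hi => ?_, ?_⟩
  · rw [Finset.mem_Icc] at hi
    have := hcoeff (n - i)
    rwa [Nat.sub_sub_self hi.2] at this
  · have hswap : ∑ i ∈ Finset.Icc 1 n, p.coeff (n - i) * x ^ (n - i)
        = ∑ k ∈ Finset.range n, p.coeff k * x ^ k := by
      refine Finset.sum_nbij' (fun i => n - i) (fun k => n - k) ?_ ?_ ?_ ?_ ?_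
      · intro i hi; rw [Finset.mem_Icc] at hi; show n - i ∈ Finset.range n
        rw [Finset.mem_range]; omega
      · intro k hk; rw [Finset.mem_range] at hk; show n - k ∈ Finset.Icc 1 n
        rw [Finset.mem_Icc]; omega
      · intro i hi; rw [Finset.mem_Icc] at hi; show n - (n - i) = i; omega
      · intro k hk; rw [Finset.mem_range] at hk; show n - (n - k) = k; omega
      · intro i hi; rfl
    rw [hswap]
    have heval := hpx
    rw [Polynomial.eval_eq_sum_range, Finset.sum_range_succ, ← hn_def,
      Polynomial.Monic.coeff_natDegree hmonic, one_mul, add_comm] at heval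
    exact heval
end

section
/- Let (R, m) be a regular local ring of dimension d with regular system of parameters x₁, …, x_d. Then the annihilator of the paraclass 1/(x₁⋯x_d) ∈ H^d_m(R) is exactly the ideal (x₁, …, x_d) = m; equivalently, for r ∈ R, there exist t ≥ 0 and bᵢ ∈ R with r(x₁⋯x_d)^t = Σᵢ bᵢ xᵢ^{t+1} if and only if r ∈ m. -/
open Ideal

section Elementary

variable {R : Type*} [CommRing R]

/-- Elementary (ideal-theoretic) weak regularity of a list over a base ideal. -/
def ElemWR (I : Ideal R) : List R → Prop
  | [] => True
  | a :: l => (∀ r : R, a * r ∈ I → r ∈ I) ∧ ElemWR (I ⊔ Ideal.span {a}) l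

lemma mem_sup_span_singleton {I : Ideal R} {c z : R} :
    z ∈ I ⊔ Ideal.span {c} ↔ ∃ q ∈ I, ∃ e : R, z = q + e * c := by
  rw [Submodule.mem_sup]
  constructor
  · rintro ⟨q, hq, w, hw, rfl⟩
    rcases Ideal.mem_span_singleton'.mp hw with ⟨e, rfl⟩
    exact ⟨q, hq, e, rfl⟩
  · rintro ⟨q, hq, e, rfl⟩
    exact ⟨q, hq, e * c, Ideal.mem_span_singleton'.mpr ⟨e, rfl⟩, rfl⟩

lemma ElemWR.congr {I J : Ideal R} {l : List R} (h : ElemWR I l) (hIJ : I = J) :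
    ElemWR J l := hIJ ▸ h

/-- Key product lemma, auxiliary inductive form. -/
lemma ElemWR.mul_aux (a b : R) :
    ∀ (l : List R) (J : Ideal R),
      ElemWR (J ⊔ Ideal.span {a}) l → ElemWR (J ⊔ Ideal.span {b}) l →
      (∀ s : R, a * s ∈ J ⊔ Ideal.span {a * b} → s ∈ J ⊔ Ideal.span {b}) →
      ElemWR (J ⊔ Ideal.span {a * b}) l
  | [], _, _, _, _ => trivial
  | z :: w, J, h1, h2, hD => by
    obtain ⟨h1z, h1w⟩ := h1
    obtain ⟨h2z, h2w⟩ := h2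
    constructor
    · -- z is regular mod J ⊔ (ab)
      intro r hr
      rcases mem_sup_span_singleton.mp hr with ⟨q, hq, e, he⟩
      have hra : r ∈ J ⊔ Ideal.span {a} := by
        apply h1z
        rw [mem_sup_span_singleton]
        exact ⟨q, hq, e * b, by rw [he]; ring⟩
      rcases mem_sup_span_singleton.mp hra with ⟨q₁, hq₁, s, hs⟩
      have hzs : a * (z * s) ∈ J ⊔ Ideal.span {a * b} := by
        have heq2 : a * (z * s) = z * r - z * q₁ := by rw [hs]; ring
        rw [heq2]
        exact Submodule.sub_mem _ hr (Submodule.mem_sup_left (Ideal.mul_mem_left _ _ hq₁))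
      have hsb := h2z _ (hD _ hzs)
      rcases mem_sup_span_singleton.mp hsb with ⟨q₂, hq₂, v, hv⟩
      rw [mem_sup_span_singleton]
      refine ⟨q₁ + q₂ * a, Ideal.add_mem _ hq₁ (Ideal.mul_mem_right _ _ hq₂), v, ?_⟩
      rw [hs, hv]; ring
    · -- recurse with J' = J ⊔ (z)
      have key : ElemWR ((J ⊔ Ideal.span {z}) ⊔ Ideal.span {a * b}) w := by
        apply ElemWR.mul_aux a b w (J ⊔ Ideal.span {z})
        · exact h1w.congr (sup_right_comm J (Ideal.span {a}) (Ideal.span {z}))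
        · exact h2w.congr (sup_right_comm J (Ideal.span {b}) (Ideal.span {z}))
        · intro s hs
          rcases Submodule.mem_sup.mp hs with ⟨u, hu, w', hw', huw⟩
          rcases mem_sup_span_singleton.mp hu with ⟨q, hq, e, he⟩
          rcases Ideal.mem_span_singleton'.mp hw' with ⟨c, hc⟩
          have heq : a * s = q + e * z + c * (a * b) := by
            rw [← huw, he, ← hc]
          have hez : z * e ∈ J ⊔ Ideal.span {a} := by
            have heq3 : z * e = (s - c * b) * a - q := by linear_combination -heq
            rw [heq3]
            refine Submodule.sub_mem _ ?_ (Submodule.mem_sup_left hq)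
            exact Submodule.mem_sup_right (Ideal.mem_span_singleton'.mpr ⟨s - c * b, rfl⟩)
          rcases mem_sup_span_singleton.mp (h1z _ hez) with ⟨q₃, hq₃, g, hg⟩
          have hkey : a * (s - g * z - c * b) ∈ J ⊔ Ideal.span {a * b} := by
            have heq4 : a * (s - g * z - c * b) = q + q₃ * z := by
              linear_combination heq + z * hg
            rw [heq4]
            exact Submodule.mem_sup_left
              (Ideal.add_mem _ hq (Ideal.mul_mem_right _ _ hq₃))
          rcases mem_sup_span_singleton.mp (hD _ hkey) with ⟨q₄, hq₄, v, hv⟩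
          rw [mem_sup_span_singleton]
          refine ⟨q₄ + g * z, ?_, v + c, by linear_combination hv⟩
          exact Submodule.add_mem _ (Submodule.mem_sup_left hq₄)
            (Submodule.mem_sup_right (Ideal.mem_span_singleton'.mpr ⟨g, rfl⟩))
      exact key.congr (sup_right_comm J (Ideal.span {z}) (Ideal.span {a * b}))

lemma ElemWR.mul {I : Ideal R} {a b : R} {l : List R}
    (h1 : ElemWR I (a :: l)) (h2 : ElemWR I (b :: l)) : ElemWR I ((a * b) :: l) := by
  obtain ⟨h1a, h1l⟩ := h1
  obtain ⟨h2b, h2l⟩ := h2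
  refine ⟨fun r hr => h2b r (h1a (b * r) (by rw [← mul_assoc]; exact hr)), ?_⟩
  apply ElemWR.mul_aux a b l I h1l h2l
  intro s hs
  rcases mem_sup_span_singleton.mp hs with ⟨q, hq, c, hc⟩
  have hmem : a * (s - c * b) ∈ I := by
    have heq : a * (s - c * b) = q := by linear_combination hc
    rw [heq]; exact hq
  rw [mem_sup_span_singleton]
  exact ⟨s - c * b, h1a _ hmem, c, by ring⟩

lemma ElemWR.pow_head {I : Ideal R} {a : R} {l : List R}
    (h : ElemWR I (a :: l)) : ∀ n : ℕ, ElemWR I (a ^ (n + 1) :: l)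
  | 0 => by simpa using h
  | n + 1 => by
    have hm := (ElemWR.pow_head h n).mul h
    rw [← pow_succ] at hm
    exact hm

/-- Powering the initial segment of a weakly regular list. -/
lemma ElemWR.pow_prefix (k : ℕ) :
    ∀ (w m : List R) (I : Ideal R), ElemWR I (w ++ m) →
      ElemWR I (w.map (· ^ (k + 1)) ++ m)
  | [], _, _, h => h
  | z :: w, m, I, h => by
    have h' : ElemWR I (z ^ (k + 1) :: (w ++ m)) := ElemWR.pow_head h k
    exact ⟨h'.1, ElemWR.pow_prefix k w m _ h'.2⟩

lemma ElemWR.append : ∀ (p q : List R) (I : Ideal R),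
    ElemWR I (p ++ q) → ElemWR (I ⊔ Ideal.ofList p) q
  | [], _, _, h => h.congr (by simp)
  | a :: p, q, I, h =>
    (ElemWR.append p q _ h.2).congr (by rw [Ideal.ofList_cons, ← sup_assoc])

/-- Division lemma: if `y` is regular mod `J` then `s * y^a ∈ J + (y^{a+1})` implies
`s ∈ J + (y)`. -/
lemma div_lemma {J : Ideal R} {y : R} (hy : ∀ r : R, y * r ∈ J → r ∈ J) :
    ∀ (a : ℕ) (s : R), s * y ^ a ∈ J ⊔ Ideal.span {y ^ (a + 1)} → s ∈ J ⊔ Ideal.span {y}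
  | 0, s, h => by
    rcases mem_sup_span_singleton.mp h with ⟨q, hq, e, he⟩
    rw [mem_sup_span_singleton]
    exact ⟨q, hq, e, by rw [pow_one] at he; simpa using he⟩
  | a + 1, s, h => by
    rcases mem_sup_span_singleton.mp h with ⟨q, hq, c, hc⟩
    have hyq : y * (s * y ^ a - c * y ^ (a + 1)) ∈ J := by
      have heq : y * (s * y ^ a - c * y ^ (a + 1)) = q := by
        have hps : y ^ (a + 1 + 1) = y * y ^ (a + 1) := by ring
        linear_combination hc - c * hps
      rw [heq]; exact hq
    have hstep : s * y ^ a ∈ J ⊔ Ideal.span {y ^ (a + 1)} := by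
      rw [mem_sup_span_singleton]
      exact ⟨s * y ^ a - c * y ^ (a + 1), hy _ hyq, c, by ring⟩
    exact div_lemma hy a s hstep

lemma elemWR_of_forall_idx : ∀ (l : List R) (I : Ideal R),
    (∀ (i : ℕ) (h : i < l.length) (r : R),
      l[i] * r ∈ I ⊔ Ideal.ofList (l.take i) → r ∈ I ⊔ Ideal.ofList (l.take i)) →
    ElemWR I l
  | [], _, _ => trivial
  | a :: l, I, H => by
    constructor
    · intro r hr
      have h0 := H 0 (Nat.succ_pos _) r (by simpa using hr)
      simpa using h0
    · apply elemWR_of_forall_idx l (I ⊔ Ideal.span {a})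
      intro i hi r hm
      have hi' : i + 1 < (a :: l).length := Nat.succ_lt_succ hi
      have hm' : (a :: l)[i + 1] * r ∈ I ⊔ Ideal.ofList ((a :: l).take (i + 1)) := by
        simp only [List.getElem_cons_succ, List.take_succ_cons, Ideal.ofList_cons,
          ← sup_assoc]
        exact hm
      have key := H (i + 1) hi' r hm'
      simp only [List.getElem_cons_succ, List.take_succ_cons, Ideal.ofList_cons,
        ← sup_assoc] at key
      exact key

lemma ideal_smul_top (I : Ideal R) : (I • ⊤ : Submodule R R) = I := by
  rw [Ideal.smul_eq_mul, Ideal.mul_top]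

lemma elemWR_of_isWeaklyRegular {l : List R}
    (h : RingTheory.Sequence.IsWeaklyRegular R l) : ElemWR (⊥ : Ideal R) l := by
  apply elemWR_of_forall_idx
  intro i hi r hr
  have hreg := h.regular_mod_prev i hi
  rw [bot_sup_eq] at hr ⊢
  have hmem : l[i] • r ∈ (Ideal.ofList (l.take i) • ⊤ : Submodule R R) := by
    rw [ideal_smul_top, smul_eq_mul]; exact hr
  have := mem_of_isSMulRegular_quotient_of_smul_mem hreg hmem
  rwa [ideal_smul_top] at this

/-- The main colon-ideal claim. -/
lemma main_claim (l₀ : List R)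
    (H : ∀ l' : List R, l'.Perm l₀ → ElemWR (⊥ : Ideal R) l') (t : ℕ) :
    ∀ (z p : List R), (p ++ z).Perm l₀ → ∀ r : R,
      r * z.prod ^ t ∈ Ideal.ofList p ⊔ Ideal.ofList (z.map (· ^ (t + 1))) →
      r ∈ Ideal.ofList p ⊔ Ideal.ofList z
  | [], p, _, r, hmem => by simpa using hmem
  | y :: w, p, hperm, r, hmem => by
    set J := Ideal.ofList p ⊔ Ideal.ofList (w.map (· ^ (t + 1))) with hJ
    have hperm1 : (p ++ (w ++ [y])).Perm l₀ :=
      ((List.perm_append_singleton y w).append_left p).trans hperm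
    have h2 : ElemWR (Ideal.ofList p) (w ++ [y]) :=
      (ElemWR.append p _ _ (H _ hperm1)).congr (by simp)
    have h3 : ElemWR (Ideal.ofList p) (w.map (· ^ (t + 1)) ++ [y]) :=
      ElemWR.pow_prefix t w [y] _ h2
    have h4 : ElemWR J [y] := ElemWR.append (w.map (· ^ (t + 1))) [y] _ h3
    have hyreg : ∀ s : R, y * s ∈ J → s ∈ J := h4.1
    have hmem' : (r * w.prod ^ t) * y ^ t ∈ J ⊔ Ideal.span {y ^ (t + 1)} := by
      have e1 : Ideal.ofList p ⊔ Ideal.ofList ((y :: w).map (· ^ (t + 1)))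
          = J ⊔ Ideal.span {y ^ (t + 1)} := by
        rw [List.map_cons, Ideal.ofList_cons, hJ]
        rw [sup_comm (Ideal.span {y ^ (t + 1)}) (Ideal.ofList (w.map (· ^ (t + 1)))),
          ← sup_assoc]
      have e2 : (r * w.prod ^ t) * y ^ t = r * (y :: w).prod ^ t := by
        rw [List.prod_cons, mul_pow]; ring
      rw [e2, ← e1]
      exact hmem
    have h5 : r * w.prod ^ t ∈ J ⊔ Ideal.span {y} := div_lemma hyreg t _ hmem'
    have h6 : r * w.prod ^ t ∈
        Ideal.ofList (p ++ [y]) ⊔ Ideal.ofList (w.map (· ^ (t + 1))) := by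
      have e3 : Ideal.ofList (p ++ [y]) ⊔ Ideal.ofList (w.map (· ^ (t + 1)))
          = J ⊔ Ideal.span {y} := by
        rw [Ideal.ofList_append, Ideal.ofList_singleton, hJ]
        exact sup_right_comm _ _ _
      rw [e3]; exact h5
    have hperm2 : ((p ++ [y]) ++ w).Perm l₀ := by
      rw [List.append_assoc]; exact hperm
    have h7 := main_claim l₀ H t w (p ++ [y]) hperm2 _ h6
    rw [Ideal.ofList_append, Ideal.ofList_singleton, sup_assoc] at h7
    rwa [Ideal.ofList_cons, ← sup_assoc, sup_assoc]

end Elementary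

/-- In a regular local ring of dimension `d` with regular system of
parameters `x₁,…,x_d`, the annihilator of the paraclass `1/(x₁⋯x_d)` is exactly the
maximal ideal `(x₁,…,x_d)`: `r(x₁⋯x_d)^t ∈ (x₁^{t+1},…,x_d^{t+1})` for some `t` iff
`r ∈ m`. -/
theorem stmt_9 {R : Type*} [CommRing R] [IsNoetherianRing R] [IsLocalRing R] {d : ℕ}
    (x : Fin d → R) (hreg : RingTheory.Sequence.IsRegular R (List.ofFn x))
    (hspan : Ideal.span (Set.range x) = IsLocalRing.maximalIdeal R) (r : R) :
    (∃ (t : ℕ) (b : Fin d → R), r * (∏ i, x i) ^ t = ∑ i, b i * x i ^ (t + 1)) ↔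
      r ∈ IsLocalRing.maximalIdeal R := by
  constructor
  · rintro ⟨t, b, heq⟩
    have hxm : ∀ a ∈ List.ofFn x, a ∈ IsLocalRing.maximalIdeal R := by
      intro a ha
      rcases List.mem_ofFn.mp ha with ⟨i, rfl⟩
      rw [← hspan]
      exact Ideal.subset_span ⟨i, rfl⟩
    have H : ∀ l' : List R, l'.Perm (List.ofFn x) → ElemWR (⊥ : Ideal R) l' := by
      intro l' hp
      exact elemWR_of_isWeaklyRegular
        (IsLocalRing.isWeaklyRegular_of_perm_of_subset_maximalIdeal
          hreg.toIsWeaklyRegular hp.symm hxm)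
    have hmem : r * (List.ofFn x).prod ^ t ∈
        Ideal.ofList (([] : List R)) ⊔ Ideal.ofList ((List.ofFn x).map (· ^ (t + 1))) := by
      rw [List.prod_ofFn, heq, Ideal.ofList_nil, bot_sup_eq]
      refine Ideal.sum_mem _ fun i _ => Ideal.mul_mem_left _ _ (Ideal.subset_span ?_)
      exact List.mem_map.mpr ⟨x i, List.mem_ofFn.mpr ⟨i, rfl⟩, rfl⟩
    have := main_claim (List.ofFn x) H t (List.ofFn x) [] (by simp) r hmem
    rw [Ideal.ofList_nil, bot_sup_eq] at this
    rw [← hspan]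
    have hset : {a | a ∈ List.ofFn x} = Set.range x := by
      ext a; simp [List.mem_ofFn]
    rwa [show Ideal.ofList (List.ofFn x) = Ideal.span (Set.range x) from
      congrArg Ideal.span hset] at this
  · intro hr
    rw [← hspan] at hr
    rcases Ideal.mem_span_range_iff_exists_fun.mp hr with ⟨c, hc⟩
    exact ⟨0, c, by simpa using hc.symm⟩
end

section
/- Let R be a noetherian ring, x₁, …, x_d a regular sequence on R, and t ≥ 0. Then (x₁⋯x_d)^t ∉ (x₁^{t+1}, …, x_d^{t+1}). In particular, in a local ring admitting a regular sequence of parameters, the paraclass 1/(x₁⋯x_d) is nonzero in H^d_m(R). -/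
namespace Stmt10

variable {S : Type*} [CommRing S]

/-- `a` is a nonzerodivisor modulo the ideal `I`. -/
def NZD (I : Ideal S) (a : S) : Prop := ∀ r, a * r ∈ I → r ∈ I

/-- `l` is a weakly regular sequence modulo the ideal `I`. -/
def RSeq (I : Ideal S) : List S → Prop
  | [] => True
  | a :: l => NZD I a ∧ RSeq (I ⊔ Ideal.span {a}) l

lemma mem_sup_singleton {I : Ideal S} {a r : S} :
    r ∈ I ⊔ Ideal.span {a} ↔ ∃ u ∈ I, ∃ c, r = u + c * a := by
  rw [Submodule.mem_sup]
  constructor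
  · rintro ⟨u, hu, z, hz, rfl⟩
    obtain ⟨c, rfl⟩ := Ideal.mem_span_singleton'.mp hz
    exact ⟨u, hu, c, rfl⟩
  · rintro ⟨u, hu, c, rfl⟩
    exact ⟨u, hu, c * a, Ideal.mem_span_singleton'.mpr ⟨c, rfl⟩, rfl⟩

lemma nzd_pow {I : Ideal S} {a : S} (h : NZD I a) (n : ℕ) : NZD I (a ^ n) := by
  induction n with
  | zero => intro r hr; simpa using hr
  | succ n ih =>
    intro r hr
    apply h
    apply ih
    have : a ^ n * (a * r) = a ^ (n + 1) * r := by ring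
    rw [this]; exact hr

lemma rseq_of_top : ∀ (l : List S) (I : Ideal S), I = ⊤ → RSeq I l
  | [], _, _ => trivial
  | a :: l, I, h => by
    subst h
    exact ⟨fun r _ => trivial, rseq_of_top l _ (by simp)⟩
/-- Key lemma (SES argument): if `l` is regular both mod `I ⊔ (a)` and mod `I ⊔ (a')`,
and multiplication by `a` is "injective" from `R/(I ⊔ (a'))` to `R/(I ⊔ (aa'))`,
then `l` is regular mod `I ⊔ (aa')`. -/
lemma rseq_mul (a a' : S) :
    ∀ (l : List S) (I : Ideal S),
      RSeq (I ⊔ Ideal.span {a}) l → RSeq (I ⊔ Ideal.span {a'}) l →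
      (∀ r, a * r ∈ I ⊔ Ideal.span {a * a'} → r ∈ I ⊔ Ideal.span {a'}) →
      RSeq (I ⊔ Ideal.span {a * a'}) l
  | [], _, _, _, _ => trivial
  | b :: l, I, ha, ha', hinj => by
    obtain ⟨hba, hta⟩ := ha
    obtain ⟨hba', hta'⟩ := ha'
    constructor
    · -- NZD (I ⊔ span {a*a'}) b
      intro r hr
      have h1 : b * r ∈ I ⊔ Ideal.span {a} :=
        sup_le_sup_left (Ideal.span_le.mpr (by
          simp only [Set.singleton_subset_iff, SetLike.mem_coe]
          exact Ideal.mem_span_singleton.mpr ⟨a', rfl⟩)) I hr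
      obtain ⟨v, hv, c, rfl⟩ := mem_sup_singleton.mp (hba r h1)
      have h3 : a * (b * c) ∈ I ⊔ Ideal.span {a * a'} := by
        have he : a * (b * c) = b * (v + c * a) - b * v := by ring
        rw [he]
        exact sub_mem hr (le_sup_left (α := Ideal S) (Ideal.mul_mem_left _ _ hv))
      obtain ⟨w, hw, f, rfl⟩ := mem_sup_singleton.mp (hba' c (hinj _ h3))
      have he : v + (w + f * a') * a = (v + w * a) + f * (a * a') := by ring
      rw [he]
      exact add_mem (le_sup_left (α := Ideal S)
          (add_mem hv (Ideal.mul_mem_right _ _ hw)))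
        (le_sup_right (α := Ideal S) (Ideal.mem_span_singleton'.mpr ⟨f, rfl⟩))
    · -- tail
      have hinj' : ∀ r, a * r ∈ (I ⊔ Ideal.span {b}) ⊔ Ideal.span {a * a'} →
          r ∈ (I ⊔ Ideal.span {b}) ⊔ Ideal.span {a'} := by
        intro r hr
        obtain ⟨p, hp, c, heq1⟩ := mem_sup_singleton.mp hr
        obtain ⟨u, hu, e, rfl⟩ := mem_sup_singleton.mp hp
        -- heq1 : a * r = (u + e * b) + c * (a * a')
        have hbe : b * e ∈ I ⊔ Ideal.span {a} := by
          have he : b * e = (a * (r - c * a') - u) := by linear_combination -heq1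
          rw [he]
          exact sub_mem (le_sup_right (α := Ideal S)
            (Ideal.mem_span_singleton'.mpr ⟨r - c * a', by ring⟩)) (le_sup_left (α := Ideal S) hu)
        obtain ⟨u', hu', s, rfl⟩ := mem_sup_singleton.mp (hba e hbe)
        have h2 : a * (r - s * b - c * a') ∈ I ⊔ Ideal.span {a * a'} := by
          have he : a * (r - s * b - c * a') = u + u' * b := by linear_combination heq1
          rw [he]
          exact le_sup_left (α := Ideal S) (add_mem hu (Ideal.mul_mem_right _ _ hu'))
        have h4 := hinj _ h2
        have he : r = (r - s * b - c * a') + s * b + c * a' := by ring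
        rw [he]
        refine add_mem (add_mem ?_ ?_) ?_
        · exact sup_le_sup_right (le_sup_left (α := Ideal S)) _ h4
        · exact le_sup_left (α := Ideal S) (le_sup_right (α := Ideal S)
            (Ideal.mem_span_singleton'.mpr ⟨s, rfl⟩))
        · exact le_sup_right (α := Ideal S) (Ideal.mem_span_singleton'.mpr ⟨c, rfl⟩)
      have h5 := rseq_mul a a' l (I ⊔ Ideal.span {b})
        (by rwa [sup_right_comm] at hta) (by rwa [sup_right_comm] at hta') hinj'
      rwa [sup_right_comm] at h5

lemma rseq_pow {I : Ideal S} {a : S} {l : List S} (h : RSeq I (a :: l)) (t : ℕ) :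
    RSeq I (a ^ t :: l) := by
  induction t with
  | zero =>
    refine ⟨fun r hr => by simpa using hr, rseq_of_top l _ ?_⟩
    rw [pow_zero, Ideal.span_singleton_one, sup_top_eq]
  | succ t ih =>
    refine ⟨nzd_pow h.1 (t + 1), ?_⟩
    have hinj : ∀ r, a * r ∈ I ⊔ Ideal.span {a * a ^ t} → r ∈ I ⊔ Ideal.span {a ^ t} := by
      intro r hr
      obtain ⟨u, hu, c, heq⟩ := mem_sup_singleton.mp hr
      have h2 : a * (r - c * a ^ t) ∈ I := by
        have he : a * (r - c * a ^ t) = u := by linear_combination heq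
        rw [he]; exact hu
      have h3 := h.1 _ h2
      have he : r = (r - c * a ^ t) + c * a ^ t := by ring
      rw [he]
      exact add_mem (le_sup_left (α := Ideal S) h3)
        (le_sup_right (α := Ideal S) (Ideal.mem_span_singleton'.mpr ⟨c, rfl⟩))
    have h5 := rseq_mul a (a ^ t) l I h.2 ih.2 hinj
    rwa [← pow_succ'] at h5

lemma rseq_pow_map (e : ℕ) : ∀ (l₁ : List S) {l₂ : List S} {I : Ideal S},
    RSeq I (l₁ ++ l₂) → RSeq I (l₁.map (· ^ e) ++ l₂)
  | [], _, _, h => h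
  | a :: l₁, l₂, I, h => by
    have h' := rseq_pow (show RSeq I (a :: (l₁ ++ l₂)) from h) e
    exact ⟨h'.1, rseq_pow_map e l₁ h'.2⟩

lemma rseq_last_nzd : ∀ (l : List S) {y : S} {I : Ideal S},
    RSeq I (l ++ [y]) → NZD (I ⊔ Ideal.ofList l) y
  | [], y, I, h => by
    have he : I ⊔ Ideal.ofList ([] : List S) = I := by simp
    rw [he]; exact h.1
  | a :: l, y, I, h => by
    have h1 := rseq_last_nzd l h.2
    have he : I ⊔ Ideal.ofList (a :: l) = (I ⊔ Ideal.span {a}) ⊔ Ideal.ofList l := by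
      rw [Ideal.ofList_cons, sup_assoc]
    rw [he]; exact h1

lemma rseq_swap [IsNoetherianRing S] {I : Ideal S} {a b : S} {l : List S}
    (hja : a ∈ Ideal.jacobson (⊥ : Ideal S)) (h : RSeq I (a :: b :: l)) :
    RSeq I (b :: a :: l) := by
  obtain ⟨ha, hb, htl⟩ := h
  refine ⟨?_, ?_, ?_⟩
  · -- NZD I b, via Nakayama
    set K : Ideal S := I.colon (Ideal.span {b}) with hK
    have hmemK : ∀ r : S, r ∈ K ↔ b * r ∈ I := by
      intro r
      rw [hK, Ideal.mem_colon_span_singleton, mul_comm]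
    have hKle : K ≤ I ⊔ Ideal.span {a} • K := by
      intro r hr
      have h1 : r ∈ I ⊔ Ideal.span {a} :=
        hb r (le_sup_left (α := Ideal S) ((hmemK r).mp hr))
      obtain ⟨u, hu, c, rfl⟩ := mem_sup_singleton.mp h1
      have hbc : c ∈ K := by
        rw [hmemK]
        apply ha
        have he : a * (b * c) = b * (u + c * a) - b * u := by ring
        rw [he]
        exact sub_mem ((hmemK _).mp hr) (Ideal.mul_mem_left _ _ hu)
      refine add_mem (le_sup_left (α := Ideal S) hu) (le_sup_right (α := Ideal S) ?_)
      have he : c * a = a • c := by rw [smul_eq_mul]; ring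
      rw [he]
      exact Submodule.smul_mem_smul (Ideal.mem_span_singleton_self a) hbc
    have hnak := Submodule.sup_eq_sup_smul_of_le_smul_of_le_jacobson
      (I := Ideal.span {a}) (J := ⊥) (N := I) (N' := K)
      (IsNoetherian.noetherian K)
      (Ideal.span_le.mpr (by simpa using hja)) hKle
    have hKleI : K ≤ I := by
      rw [Submodule.bot_smul, sup_bot_eq] at hnak
      exact le_sup_right.trans hnak.le
    intro r hr
    exact hKleI ((hmemK r).mpr hr)
  · -- NZD (I ⊔ span b) a
    intro r hr
    obtain ⟨u, hu, c, heq⟩ := mem_sup_singleton.mp hr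
    have hbc : b * c ∈ I ⊔ Ideal.span {a} := by
      have he : b * c = a * r - u := by linear_combination -heq
      rw [he]
      exact sub_mem (le_sup_right (α := Ideal S)
        (Ideal.mem_span_singleton'.mpr ⟨r, by ring⟩)) (le_sup_left (α := Ideal S) hu)
    obtain ⟨u', hu', e, rfl⟩ := mem_sup_singleton.mp (hb c hbc)
    have h2 : r - e * b ∈ I := by
      apply ha
      have he : a * (r - e * b) = u + u' * b := by linear_combination heq
      rw [he]
      exact add_mem hu (Ideal.mul_mem_right _ _ hu')
    have he : r = (r - e * b) + e * b := by ring
    rw [he]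
    exact add_mem (le_sup_left (α := Ideal S) h2)
      (le_sup_right (α := Ideal S) (Ideal.mem_span_singleton'.mpr ⟨e, rfl⟩))
  · rwa [sup_right_comm] at htl

lemma rseq_perm [IsNoetherianRing S] {l l' : List S} (hp : l.Perm l') :
    (∀ z ∈ l, z ∈ Ideal.jacobson (⊥ : Ideal S)) → ∀ I : Ideal S, RSeq I l → RSeq I l' := by
  induction hp with
  | nil => exact fun _ _ h => h
  | cons a hp ih =>
    intro hm I h
    exact ⟨h.1, ih (fun z hz => hm z (List.mem_cons_of_mem _ hz)) _ h.2⟩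
  | swap a b l =>
    intro hm I h
    exact rseq_swap (hm b (by simp)) h
  | trans hp1 hp2 ih1 ih2 =>
    intro hm I h
    exact ih2 (fun z hz => hm z (hp1.mem_iff.mpr hz)) I (ih1 hm I h)

/-- The colon lemma: for a regular sequence `l` mod `I` (with entries in the Jacobson
radical), if `z⋅(∏l)^t ∈ I ⊔ (x₁^{t+1},…)` then `z ∈ I ⊔ (x₁,…)`. -/
lemma rseq_colon [IsNoetherianRing S] (t : ℕ) (l : List S) :
    (∀ z ∈ l, z ∈ Ideal.jacobson (⊥ : Ideal S)) →
    ∀ I : Ideal S, RSeq I l →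
    ∀ z : S, z * l.prod ^ t ∈ I ⊔ Ideal.ofList (l.map (· ^ (t + 1))) →
    z ∈ I ⊔ Ideal.ofList l := by
  induction l using List.reverseRecOn with
  | nil => intro _ I _ z hz; simpa using hz
  | append_singleton l' y ih =>
    intro hm I hR z hz
    rw [List.map_append, Ideal.ofList_append, List.map_singleton, Ideal.ofList_singleton,
      List.prod_append, List.prod_singleton, ← sup_assoc] at hz
    obtain ⟨w, hw, c, hc⟩ := mem_sup_singleton.mp hz
    have hynzd : NZD (I ⊔ Ideal.ofList (l'.map (· ^ (t + 1)))) y :=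
      rseq_last_nzd _ (rseq_pow_map (t + 1) l' hR)
    have h5 : z * l'.prod ^ t - c * y ∈ I ⊔ Ideal.ofList (l'.map (· ^ (t + 1))) := by
      apply nzd_pow hynzd t
      have hkey : y ^ t * (z * l'.prod ^ t - c * y) = w := by linear_combination hc
      rw [hkey]; exact hw
    have h6 : z * l'.prod ^ t ∈ (I ⊔ Ideal.span {y}) ⊔ Ideal.ofList (l'.map (· ^ (t + 1))) := by
      have he : z * l'.prod ^ t = (z * l'.prod ^ t - c * y) + c * y := by ring
      rw [he]
      refine add_mem (sup_le_sup_right (le_sup_left (α := Ideal S)) _ h5) ?_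
      exact le_sup_left (α := Ideal S) (le_sup_right (α := Ideal S)
        (Ideal.mem_span_singleton'.mpr ⟨c, rfl⟩))
    have hseq' : RSeq (I ⊔ Ideal.span {y}) l' :=
      (rseq_perm (List.perm_append_singleton y l') hm I hR).2
    have h7 := ih (fun z hz => hm z (List.mem_append_left _ hz)) (I ⊔ Ideal.span {y}) hseq' z h6
    have he : I ⊔ Ideal.ofList (l' ++ [y]) = (I ⊔ Ideal.span {y}) ⊔ Ideal.ofList l' := by
      rw [Ideal.ofList_append, Ideal.ofList_singleton, sup_comm (Ideal.ofList l'), ← sup_assoc]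
    rw [he]; exact h7

lemma smul_top_eq (J : Ideal S) : J • (⊤ : Submodule S S) = J := by
  rw [smul_eq_mul, Ideal.mul_top]

lemma nzd_of_isSMulRegular {J : Ideal S} {a : S}
    (h : IsSMulRegular (S ⧸ (J • ⊤ : Submodule S S)) a) : NZD J a := by
  intro r hr
  have h0 : a • (Submodule.Quotient.mk r : S ⧸ (J • ⊤ : Submodule S S)) = a • 0 := by
    rw [smul_zero, ← Submodule.Quotient.mk_smul, Submodule.Quotient.mk_eq_zero, smul_top_eq,
      smul_eq_mul]
    exact hr
  have h1 := h h0
  rw [Submodule.Quotient.mk_eq_zero, smul_top_eq] at h1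
  exact h1

lemma rseq_of_prefix : ∀ (l : List S) (I : Ideal S),
    (∀ i (h : i < l.length), NZD (I ⊔ Ideal.ofList (l.take i)) l[i]) → RSeq I l
  | [], _, _ => trivial
  | a :: l, I, h => by
    constructor
    · have h0 := h 0 (by simp)
      rw [List.take_zero, Ideal.ofList_nil, sup_bot_eq, List.getElem_cons_zero] at h0
      exact h0
    · apply rseq_of_prefix l
      intro i hi
      have h1 := h (i + 1) (by simpa using hi)
      rw [List.getElem_cons_succ, List.take_succ_cons, Ideal.ofList_cons, ← sup_assoc] at h1
      exact h1

lemma rseq_of_isWeaklyRegular {l : List S} (h : RingTheory.Sequence.IsWeaklyRegular S l) :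
    RSeq (⊥ : Ideal S) l := by
  apply rseq_of_prefix
  intro i hi
  have h2 := nzd_of_isSMulRegular (h.regular_mod_prev i hi)
  rw [bot_sup_eq]
  exact h2

lemma rseq_map_localization {R : Type*} [CommRing R] {Sl : Type*} [CommRing Sl] [Algebra R Sl]
    (M : Submonoid R) [IsLocalization M Sl] :
    ∀ (l : List R) (I : Ideal R), RSeq I l →
      RSeq (I.map (algebraMap R Sl)) (l.map (algebraMap R Sl))
  | [], _, _ => trivial
  | a :: l, I, h => by
    constructor
    · intro s hs
      obtain ⟨r, v, rfl⟩ := IsLocalization.exists_mk'_eq M s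
      obtain ⟨⟨i, u⟩, hu⟩ := (IsLocalization.mem_map_algebraMap_iff M Sl).mp hs
      have hspec := IsLocalization.mk'_spec Sl r v
      have h1 : algebraMap R Sl (a * r * u) = algebraMap R Sl ((i : R) * v) := by
        rw [map_mul, map_mul, map_mul, ← hspec, ← hu]
        ring
      obtain ⟨c, hc⟩ := (IsLocalization.eq_iff_exists M Sl).mp h1
      have h2 : a * (r * u * c) ∈ I := by
        have he : a * (r * (u : R) * c) = (c : R) * (a * r * u) := by ring
        rw [he, hc]
        exact Ideal.mul_mem_left _ _ (Ideal.mul_mem_right _ _ i.2)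
      have h3 : r * (u : R) * c ∈ I := h.1 _ h2
      have h4 : IsLocalization.mk' Sl r v * algebraMap R Sl ((v : R) * u * c) ∈
          I.map (algebraMap R Sl) := by
        have he : IsLocalization.mk' Sl r v * algebraMap R Sl ((v : R) * u * c) =
            algebraMap R Sl (r * u * c) := by
          rw [map_mul, map_mul, map_mul, map_mul, ← hspec]
          ring
        rw [he]
        exact Ideal.mem_map_of_mem _ h3
      have hunit : IsUnit (algebraMap R Sl ((v : R) * u * c)) :=
        IsLocalization.map_units Sl ⟨(v : R) * u * c, M.mul_mem (M.mul_mem v.2 u.2) c.2⟩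
      have h6 := Ideal.mul_mem_right (↑hunit.unit⁻¹) _ h4
      rwa [mul_assoc, IsUnit.mul_val_inv hunit, mul_one] at h6
    · have he : (I ⊔ Ideal.span {a}).map (algebraMap R Sl) =
          I.map (algebraMap R Sl) ⊔ Ideal.span {algebraMap R Sl a} := by
        rw [Ideal.map_sup, Ideal.map_span, Set.image_singleton]
      have h7 := rseq_map_localization (Sl := Sl) M l (I ⊔ Ideal.span {a}) h.2
      rw [he] at h7
      exact h7

end Stmt10

open Stmt10 in
/-- monomial property of regular sequences: if `x₁,…,x_d` is a regular
sequence on a noetherian ring `R` then `(x₁⋯x_d)^t ∉ (x₁^{t+1},…,x_d^{t+1})`; in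
particular the paraclass `1/(x₁⋯x_d)` is nonzero in `H^d_m(R)`. -/
theorem stmt_10 {R : Type*} [CommRing R] [IsNoetherianRing R] {d : ℕ}
    (x : Fin d → R) (hreg : RingTheory.Sequence.IsRegular R (List.ofFn x)) (t : ℕ) :
    (∏ i, x i) ^ t ∉ Ideal.span (Set.range fun i => x i ^ (t + 1)) := by
  intro hmem
  set l : List R := List.ofFn x with hl
  have hproper : Ideal.ofList l ≠ ⊤ := by
    have h0 := hreg.top_ne_smul
    rw [smul_top_eq] at h0
    exact fun hT => h0 hT.symm
  obtain ⟨m, hmax, hle⟩ := Ideal.exists_le_maximal _ hproper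
  haveI : m.IsPrime := hmax.isPrime
  set Sl := Localization.AtPrime m with hSl
  haveI : IsNoetherianRing Sl := IsLocalization.isNoetherianRing m.primeCompl Sl ‹_›
  have hx_mem : ∀ a ∈ l, algebraMap R Sl a ∈ IsLocalRing.maximalIdeal Sl := by
    intro a ha
    rw [IsLocalization.AtPrime.to_map_mem_maximal_iff Sl m]
    exact hle (Ideal.subset_span ha)
  have hjac : ∀ a ∈ l.map (algebraMap R Sl), a ∈ Ideal.jacobson (⊥ : Ideal Sl) := by
    intro a ha
    obtain ⟨b, hb, rfl⟩ := List.mem_map.mp ha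
    rw [IsLocalRing.jacobson_eq_maximalIdeal ⊥ bot_ne_top]
    exact hx_mem b hb
  have hseq : RSeq (⊥ : Ideal Sl) (l.map (algebraMap R Sl)) := by
    have h0 : RSeq (⊥ : Ideal R) l := rseq_of_isWeaklyRegular hreg.toIsWeaklyRegular
    have h1 := rseq_map_localization (Sl := Sl) m.primeCompl l ⊥ h0
    rwa [Ideal.map_bot] at h1
  have hmem' : (1 : Sl) * (l.map (algebraMap R Sl)).prod ^ t ∈
      (⊥ : Ideal Sl) ⊔ Ideal.ofList ((l.map (algebraMap R Sl)).map (· ^ (t + 1))) := by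
    rw [one_mul, bot_sup_eq]
    have h1 : (l.map (algebraMap R Sl)).prod = algebraMap R Sl l.prod :=
      (map_list_prod (algebraMap R Sl) l).symm
    have h2 : (l.map (algebraMap R Sl)).map (· ^ (t + 1)) =
        (l.map (· ^ (t + 1))).map (algebraMap R Sl) := by
      simp [List.map_map, Function.comp_def]
    rw [h1, ← map_pow, h2, ← Ideal.map_ofList]
    apply Ideal.mem_map_of_mem
    have h3 : Ideal.span (Set.range fun i => x i ^ (t + 1)) =
        Ideal.ofList (l.map (· ^ (t + 1))) := by
      apply congrArg Ideal.span
      ext y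
      simp [hl, List.mem_ofFn, eq_comm]
    have h4 : (∏ i, x i) = l.prod := List.prod_ofFn.symm
    rw [← h3, ← h4]
    exact hmem
  have hfinal := rseq_colon t (l.map (algebraMap R Sl)) hjac ⊥ hseq 1 hmem'
  rw [bot_sup_eq] at hfinal
  have hlem : Ideal.ofList (l.map (algebraMap R Sl)) ≤ IsLocalRing.maximalIdeal Sl := by
    apply Ideal.span_le.mpr
    intro a ha
    obtain ⟨b, hb, rfl⟩ := List.mem_map.mp ha
    exact hx_mem b hb
  exact (IsLocalRing.maximalIdeal.isMaximal Sl).ne_top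
    (Ideal.eq_top_of_isUnit_mem _ (hlem hfinal) isUnit_one)
end

section
/- Let S be an integral domain that is integral over a complete noetherian local ring (R, m). Then S has a unique maximal ideal lying over m; in particular if S is module-finite over R, then S is a complete local ring. -/
lemma isPrecomplete_pi {R : Type*} [CommRing R] (I : Ideal R) [IsPrecomplete I R] (n : ℕ) :
    IsPrecomplete I (Fin n → R) := by
  constructor
  intro f hf
  have hcoord : ∀ i : Fin n, ∃ L : R, ∀ k, f k i ≡ L [SMOD (I ^ k • ⊤ : Ideal R)] := by
    intro i
    apply IsPrecomplete.prec (inferInstance : IsPrecomplete I R)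
    intro a b hab
    have := hf hab
    rw [SModEq.sub_mem] at this ⊢
    have h2 : (f a - f b) i ∈ (I ^ a • (⊤ : Submodule R (Fin n → R))).map
        (LinearMap.proj i) := Submodule.mem_map_of_mem this
    rw [Submodule.map_smul'', Submodule.map_top] at h2
    have : (f a - f b) i ∈ (I ^ a • (⊤ : Submodule R R)) :=
      smul_mono_right (I ^ a) (le_top (a := LinearMap.range (LinearMap.proj (R := R) (φ := fun _ : Fin n => R) i))) h2
    simpa using this
  choose L hL using hcoord
  refine ⟨L, fun k => ?_⟩
  rw [SModEq.sub_mem]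
  have : (f k - L) = ∑ i : Fin n, (f k i - L i) • (Pi.single i (1 : R) : Fin n → R) := by
    funext j
    rw [Finset.sum_apply]
    simp [Pi.single_apply, Finset.sum_ite_eq']
  rw [this]
  apply Submodule.sum_mem
  intro i _
  have hi := (hL i k)
  rw [SModEq.sub_mem] at hi
  have hi' : f k i - L i ∈ I ^ k := by simpa using hi
  exact Submodule.smul_mem_smul hi' trivial

lemma isPrecomplete_of_finite {R M : Type*} [CommRing R] (I : Ideal R) [IsPrecomplete I R]
    [AddCommGroup M] [Module R M] [Module.Finite R M] : IsPrecomplete I M := by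
  obtain ⟨n, π, hπ⟩ := Module.Finite.exists_fin' R M
  haveI := isPrecomplete_pi I n
  constructor
  intro f hf
  -- choose increments
  have hstep : ∀ k : ℕ, ∃ d : Fin n → R, d ∈ (I ^ k • ⊤ : Submodule R (Fin n → R)) ∧
      π d = f (k + 1) - f k := by
    intro k
    have h1 : f (k + 1) - f k ∈ (I ^ k • ⊤ : Submodule R M) := by
      have := hf (Nat.le_succ k)
      rw [SModEq.sub_mem] at this
      simpa using Submodule.neg_mem _ this
    have h2 : (I ^ k • ⊤ : Submodule R M) =
        (I ^ k • ⊤ : Submodule R (Fin n → R)).map π := by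
      rw [Submodule.map_smul'', Submodule.map_top, LinearMap.range_eq_top.mpr hπ]
    rw [h2] at h1
    obtain ⟨d, hd, hd'⟩ := h1
    exact ⟨d, hd, hd'⟩
  choose d hd hd' using hstep
  obtain ⟨g0, hg0⟩ := hπ (f 0)
  set g : ℕ → (Fin n → R) := fun k => g0 + ∑ j ∈ Finset.range k, d j with hg
  have hgval : ∀ k, π (g k) = f k := by
    intro k
    induction k with
    | zero => simp [hg, hg0]
    | succ k ih =>
      have : g (k + 1) = g k + d k := by
        simp [hg, Finset.sum_range_succ, add_assoc]
      rw [this, map_add, ih, hd', add_sub_cancel]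
  have hgCauchy : ∀ {a b : ℕ}, a ≤ b → g a ≡ g b [SMOD (I ^ a • ⊤ : Submodule R (Fin n → R))] := by
    intro a b hab
    rw [SModEq.sub_mem]
    have : g a - g b = -(∑ j ∈ Finset.Ico a b, d j) := by
      have h := Finset.sum_Ico_eq_sub d hab
      rw [hg]
      simp only [add_sub_add_left_eq_sub, h]
      abel
    rw [this]
    apply Submodule.neg_mem
    apply Submodule.sum_mem
    intro j hj
    exact Submodule.smul_mono_left (Ideal.pow_le_pow_right (Finset.mem_Ico.mp hj).1) (hd j)
  obtain ⟨L, hL⟩ := IsPrecomplete.prec (inferInstance : IsPrecomplete I (Fin n → R))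
    (f := g) (fun {a b} hab => hgCauchy hab)
  refine ⟨π L, fun k => ?_⟩
  rw [SModEq.sub_mem]
  have := hL k
  rw [SModEq.sub_mem] at this
  have h2 : π (g k - L) ∈ ((I ^ k • ⊤ : Submodule R (Fin n → R)).map π) :=
    Submodule.mem_map_of_mem this
  rw [Submodule.map_smul'', Submodule.map_top, LinearMap.range_eq_top.mpr hπ] at h2
  rw [map_sub, hgval] at h2
  exact h2

lemma exists_idem' {A : Type*} [CommRing A] [IsArtinianRing A] {N₁ N₂ : Ideal A}
    (h₁ : N₁.IsMaximal) (h₂ : N₂.IsMaximal) (hne : N₁ ≠ N₂) :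
    ∃ ε : A, IsIdempotentElem ε ∧ ε ∈ N₁ ∧ 1 - ε ∈ N₂ := by
  classical
  set f := Ideal.Quotient.mk (nilradical A) with hf
  set e := IsArtinianRing.quotNilradicalEquivPi A with he
  set δ' : ∀ I : MaximalSpectrum A, A ⧸ I.1 :=
    fun I => if I.1 = N₁ then 0 else 1 with hδ'
  have hδ'idem : δ' * δ' = δ' := by
    funext I
    by_cases h : I.1 = N₁ <;> simp [hδ', h]
  have hker : ∀ x ∈ RingHom.ker f, IsNilpotent x := by
    intro x hx
    rw [RingHom.mem_ker, hf, Ideal.Quotient.eq_zero_iff_mem] at hx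
    exact hx
  have hrange : e.symm δ' ∈ f.range := by
    obtain ⟨x, hx⟩ := Ideal.Quotient.mk_surjective (I := nilradical A) (e.symm δ')
    exact ⟨x, hx⟩
  have hidem : IsIdempotentElem (e.symm δ') := by
    unfold IsIdempotentElem
    rw [← map_mul, hδ'idem]
  obtain ⟨ε, hεidem, hεeq⟩ := exists_isIdempotentElem_eq_of_ker_isNilpotent f hker
    (e.symm δ') hrange hidem
  have hcomp : ∀ (x : A) (I : MaximalSpectrum A),
      e (f x) I = Ideal.Quotient.mk I.1 x := fun _ _ => rfl
  have key : ∀ I : MaximalSpectrum A, Ideal.Quotient.mk I.1 ε = δ' I := by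
    intro I
    rw [← hcomp, hεeq, AlgEquiv.apply_symm_apply]
  refine ⟨ε, hεidem, ?_, ?_⟩
  · have := key ⟨N₁, h₁⟩
    simp only [hδ', if_pos rfl] at this
    rwa [Ideal.Quotient.eq_zero_iff_mem] at this
  · have := key ⟨N₂, h₂⟩
    simp only [hδ'] at this
    rw [if_neg (by simpa using hne.symm)] at this
    rw [← Ideal.Quotient.eq_zero_iff_mem, map_sub, map_one, this, sub_self]

lemma max_unique {R T : Type*} [CommRing R] [IsNoetherianRing R] [IsLocalRing R]
    [IsAdicComplete (IsLocalRing.maximalIdeal R) R] [CommRing T] [IsDomain T] [Algebra R T]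
    [Module.Finite R T] {M₁ M₂ : Ideal T} (h₁ : M₁.IsMaximal) (h₂ : M₂.IsMaximal) :
    M₁ = M₂ := by
  by_contra hne
  set m := IsLocalRing.maximalIdeal R with hm
  set J : Ideal T := m.map (algebraMap R T) with hJdef
  have hJ : ∀ {M : Ideal T}, M.IsMaximal → J ≤ M := by
    intro M hM
    rw [Ideal.map_le_iff_le_comap]
    haveI := hM
    haveI : (M.comap (algebraMap R T)).IsMaximal :=
      Ideal.isMaximal_comap_of_isIntegral_of_isMaximal M
    exact le_of_eq (IsLocalRing.eq_maximalIdeal this).symm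
  have hJ₁ : J ≤ M₁ := hJ h₁
  have hJ₂ : J ≤ M₂ := hJ h₂
  -- the quotient A = T/J is artinian
  letI k := R ⧸ m
  letI : Field k := Ideal.Quotient.field m
  letI A := T ⧸ J
  letI : Algebra k A := Ideal.Quotient.algebraQuotientOfLEComap (Ideal.le_comap_map)
  haveI : IsScalarTower R k A := IsScalarTower.of_algebraMap_eq' rfl
  haveI : Module.Finite R A := Module.Finite.of_surjective
    (IsScalarTower.toAlgHom R T A).toLinearMap Ideal.Quotient.mk_surjective
  haveI : Module.Finite k A := Module.Finite.of_restrictScalars_finite R k A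
  haveI : IsArtinianRing A := IsArtinianRing.of_finite k A
  -- two distinct maximal ideals in A
  set N₁ : Ideal A := M₁.map (Ideal.Quotient.mk J) with hN₁
  set N₂ : Ideal A := M₂.map (Ideal.Quotient.mk J) with hN₂
  have hmax : ∀ {M : Ideal T}, (hM : M.IsMaximal) → J ≤ M →
      (M.map (Ideal.Quotient.mk J)).IsMaximal := by
    intro M hM hJM
    refine Ideal.Quotient.maximal_of_isField _ ?_
    exact (DoubleQuot.quotQuotEquivQuotOfLE hJM).toMulEquiv.isField
      ((Ideal.Quotient.maximal_ideal_iff_isField_quotient M).mp hM)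
  have hN₁max : N₁.IsMaximal := hmax h₁ hJ₁
  have hN₂max : N₂.IsMaximal := hmax h₂ hJ₂
  have hNne : N₁ ≠ N₂ := by
    intro h
    apply hne
    have key : ∀ (M : Ideal T), J ≤ M → (M.map (Ideal.Quotient.mk J)).comap
        (Ideal.Quotient.mk J) = M := by
      intro M hJM
      have e := Ideal.comap_map_of_surjective (Ideal.Quotient.mk J)
        Ideal.Quotient.mk_surjective M
      rw [← RingHom.ker_eq_comap_bot, Ideal.mk_ker, sup_eq_left.mpr hJM] at e
      exact e
    rw [← key M₁ hJ₁, ← key M₂ hJ₂, ← hN₁, ← hN₂, h]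
  obtain ⟨ε, hεidem, hεN₁, hεN₂⟩ := exists_idem' hN₁max hN₂max hNne
  obtain ⟨a₀, ha₀⟩ := Ideal.Quotient.mk_surjective (I := J) ε
  have ha₀J : a₀ ^ 2 - a₀ ∈ J := by
    rw [← Ideal.Quotient.eq_zero_iff_mem, map_sub, map_pow, ha₀, sq, hεidem.eq, sub_self]
  have ha₀M₁ : a₀ ∈ M₁ := by
    rw [← Ideal.mem_quotient_iff_mem hJ₁, ha₀]; exact hεN₁
  have ha₀M₂ : 1 - a₀ ∈ M₂ := by
    rw [← Ideal.mem_quotient_iff_mem hJ₂, map_sub, map_one, ha₀]; exact hεN₂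
  -- Newton iteration
  set a : ℕ → T := fun n => Nat.rec a₀ (fun _ x => 3 * x ^ 2 - 2 * x ^ 3) n with ha
  have hrec : ∀ n, a (n + 1) = 3 * (a n) ^ 2 - 2 * (a n) ^ 3 := fun n => rfl
  have hdef : ∀ n, a n ^ 2 - a n ∈ J ^ (n + 1) := by
    intro n
    induction n with
    | zero => rw [zero_add, pow_one]; exact ha₀J
    | succ n ih =>
      have key : a (n + 1) ^ 2 - a (n + 1) =
          (a n ^ 2 - a n) * (a n ^ 2 - a n) * (4 * a n ^ 2 - 4 * a n - 3) := by
        rw [hrec]; ring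
      rw [key]
      have h1 : (a n ^ 2 - a n) * (a n ^ 2 - a n) ∈ J ^ (n + 1) * J ^ (n + 1) :=
        Ideal.mul_mem_mul ih ih
      have h2 : J ^ (n + 1) * J ^ (n + 1) ≤ J ^ (n + 2) := by
        rw [← pow_add]
        exact Ideal.pow_le_pow_right (by omega)
      exact Ideal.mul_mem_right _ _ (h2 h1)
  have hstep : ∀ n, a (n + 1) - a n ∈ J ^ (n + 1) := by
    intro n
    have key : a (n + 1) - a n = (a n ^ 2 - a n) * (1 - 2 * a n) := by
      rw [hrec]; ring
    rw [key]
    exact Ideal.mul_mem_right _ _ (hdef n)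
  -- convert between J-powers and smul-top submodules
  have hmem : ∀ (kk : ℕ) (x : T), x ∈ J ^ kk ↔ x ∈ (m ^ kk • ⊤ : Submodule R T) := by
    intro kk x
    rw [Ideal.smul_top_eq_map, Ideal.map_pow]
    rfl
  -- the sequence is Cauchy
  haveI : IsPrecomplete m T := isPrecomplete_of_finite m
  have hcauchy : ∀ {p q : ℕ}, p ≤ q → a p ≡ a q [SMOD (m ^ p • ⊤ : Submodule R T)] := by
    intro p q hpq
    rw [SModEq.sub_mem, ← hmem]
    have tele : ∑ j ∈ Finset.Ico p q, (a (j + 1) - a j) = a q - a p := by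
      rw [Finset.sum_Ico_eq_sub _ hpq, Finset.sum_range_sub, Finset.sum_range_sub]
      ring
    have : a p - a q = -(∑ j ∈ Finset.Ico p q, (a (j + 1) - a j)) := by rw [tele]; ring
    rw [this]
    apply neg_mem
    apply Ideal.sum_mem
    intro j hj
    have hpj : J ^ (j + 1) ≤ J ^ p := Ideal.pow_le_pow_right (by
      have := (Finset.mem_Ico.mp hj).1; omega)
    exact hpj (hstep j)
  obtain ⟨L, hL⟩ := IsPrecomplete.prec (inferInstance : IsPrecomplete m T) (f := a)
    (fun {p q} h => hcauchy h)
  -- L is idempotent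
  have hLmem : ∀ n, a n - L ∈ J ^ n := by
    intro n
    have := hL n
    rw [SModEq.sub_mem] at this
    rw [hmem]
    exact this
  have hJtop : J ≠ ⊤ := fun h => h₁.ne_top (top_le_iff.mp (h ▸ hJ₁))
  haveI : IsNoetherian R T := inferInstance
  haveI : IsNoetherianRing T := isNoetherian_of_tower R inferInstance
  have hLidem : L ^ 2 - L = 0 := by
    rw [← Submodule.mem_bot (R := T), ← Ideal.iInf_pow_eq_bot_of_isDomain J hJtop]
    rw [Submodule.mem_iInf]
    intro n
    have key : L ^ 2 - L = (L - a n) * (L + a n - 1) + (a n ^ 2 - a n) := by ring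
    rw [key]
    refine Ideal.add_mem _ ?_ ?_
    · have : L - a n ∈ J ^ n := by
        have := hLmem n
        simpa using Submodule.neg_mem _ this
      exact Ideal.mul_mem_right _ _ this
    · exact (Ideal.pow_le_pow_right (by omega)) (hdef n)
  have hL01 : L = 0 ∨ L = 1 := by
    have : IsIdempotentElem L := by
      unfold IsIdempotentElem
      rw [← sq]
      linear_combination hLidem
    exact IsIdempotentElem.iff_eq_zero_or_one.mp this
  have hLa₀ : L - a₀ ∈ J := by
    have h1 : a 1 - L ∈ J ^ 1 := hLmem 1
    have h2 : a 1 - a 0 ∈ J ^ 1 := hstep 0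
    have : L - a₀ = -(a 1 - L) + (a 1 - a 0) := by
      show L - a₀ = -(a 1 - L) + (a 1 - a₀)
      ring
    rw [this]
    exact Ideal.add_mem _ (neg_mem (by simpa using h1)) (by simpa using h2)
  rcases hL01 with h | h
  · have : a₀ ∈ J := by
      have := hLa₀; rw [h] at this
      simpa using neg_mem this
    exact h₂.ne_top (Ideal.eq_top_of_isUnit_mem _
      (Ideal.add_mem _ (hJ₂ this) ha₀M₂) (by simp [isUnit_one]) ▸ rfl)
  · have h1 : (1 : T) - a₀ ∈ J := by rwa [h] at hLa₀
    have : (1 : T) ∈ M₁ := by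
      have := Ideal.add_mem _ (hJ₁ h1) ha₀M₁
      simpa using this
    exact h₁.ne_top (Ideal.eq_top_iff_one _ |>.mpr this)

/-- An integral extension domain `S` of a complete noetherian local ring
`(R, 𝔪)` has a unique maximal ideal lying over `𝔪`. -/
theorem stmt_16 {R S : Type*} [CommRing R] [IsNoetherianRing R] [IsLocalRing R]
    [IsAdicComplete (IsLocalRing.maximalIdeal R) R]
    [CommRing S] [IsDomain S] [Algebra R S]
    (hinj : Function.Injective (algebraMap R S)) [Algebra.IsIntegral R S] :
    ∃! P : Ideal S, P.IsMaximal ∧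
      Ideal.comap (algebraMap R S) P = IsLocalRing.maximalIdeal R := by
  have hker : RingHom.ker (algebraMap R S) ≤ IsLocalRing.maximalIdeal R := by
    rw [(RingHom.injective_iff_ker_eq_bot _).mp hinj]
    exact bot_le
  obtain ⟨Q, hQmax, hQcomap⟩ :=
    Ideal.exists_ideal_over_maximal_of_isIntegral (IsLocalRing.maximalIdeal R) hker
  -- uniqueness among all maximal ideals
  have huniq : ∀ P P' : Ideal S, P.IsMaximal → P'.IsMaximal → P = P' := by
    intro P P' hP hP'
    by_contra hne
    have hnle : ¬P ≤ P' := fun h => hne (hP.eq_of_le hP'.ne_top h)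
    obtain ⟨s, hsP, hsP'⟩ := SetLike.not_le_iff_exists.mp hnle
    set T := Algebra.adjoin R {s} with hT
    haveI : Module.Finite R T := by
      have hfg : (Algebra.adjoin R {s}).toSubmodule.FG :=
        (Algebra.IsIntegral.isIntegral (R := R) s).fg_adjoin_singleton
      exact Module.Finite.iff_fg.mpr hfg
    haveI : Algebra.IsIntegral (↥T) S := Algebra.IsIntegral.tower_top R
    set M₁ : Ideal T := P.comap (algebraMap ↥T S) with hM₁
    set M₂ : Ideal T := P'.comap (algebraMap ↥T S) with hM₂
    haveI : M₁.IsMaximal := by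
      haveI := hP
      exact Ideal.isMaximal_comap_of_isIntegral_of_isMaximal P
    haveI : M₂.IsMaximal := by
      haveI := hP'
      exact Ideal.isMaximal_comap_of_isIntegral_of_isMaximal P'
    have heq : M₁ = M₂ := max_unique (R := R) ‹M₁.IsMaximal› ‹M₂.IsMaximal›
    have hsT : s ∈ T := Algebra.self_mem_adjoin_singleton R s
    have h1 : (⟨s, hsT⟩ : T) ∈ M₁ := by
      rw [hM₁, Ideal.mem_comap]
      exact hsP
    rw [heq, hM₂, Ideal.mem_comap] at h1
    exact hsP' h1
  refine ⟨Q, ⟨hQmax, hQcomap⟩, fun P ⟨hPmax, _⟩ => huniq P Q hPmax hQmax⟩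
end
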